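/- The function h(x) = exp(−(√(1+x²)+x)/4) belongs to the Gevrey class 𝒢¹_{1,7/2}(ℝ), i.e., |h^{(k)}(x)| ≤ (7/2)^k k! for all x ∈ ℝ and k ≥ 0, and its first derivative is integrable on ℝ. -/

import Mathlib

open Complex Metric MeasureTheory Set intervalIntegral

noncomputable def Fc : ℂ → ℂ := fun z => Complex.exp (-((1 + z ^ 2) ^ (1/2 : ℂ) + z) / 4)

lemma slit {z : ℂ} (hz : |z.im| < 1) : (1 + z ^ 2) ∈ Complex.slitPlane := by
  rcases eq_or_ne ((1 + z ^ 2).im) 0 with h | h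
  · left
    have him : (1 + z ^ 2).im = 2 * z.re * z.im := by
      simp [Complex.add_im, pow_two, Complex.mul_im]; ring
    have hre : (1 + z ^ 2).re = 1 + z.re ^ 2 - z.im ^ 2 := by
      simp [Complex.add_re, pow_two, Complex.mul_re]; ring
    rw [hre]
    rw [him] at h
    have h2 : z.im ^ 2 < 1 := by nlinarith [abs_nonneg z.im, _root_.sq_abs z.im]
    rcases mul_eq_zero.1 h with h3 | h3
    · rcases mul_eq_zero.1 h3 with h4 | h4
      · norm_num at h4
      · rw [h4]; nlinarith
    · rw [h3]; nlinarith [sq_nonneg z.re]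
  · right; exact h

lemma Fc_diffAt {z : ℂ} (hz : |z.im| < 1) : DifferentiableAt ℂ Fc z := by
  have h1 : DifferentiableAt ℂ (fun z : ℂ => 1 + z ^ 2) z := by fun_prop
  have h2 : DifferentiableAt ℂ (fun z : ℂ => (1 + z ^ 2) ^ (1/2 : ℂ)) z :=
    h1.cpow (differentiableAt_const _) (slit hz)
  exact (((h2.add differentiableAt_id).neg.div_const 4)).cexp

lemma Fc_real (x : ℝ) : Fc x = ((Real.exp (-(Real.sqrt (1 + x ^ 2) + x) / 4) : ℝ) : ℂ) := by
  unfold Fc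
  have h1 : ((1 : ℂ) + (x : ℂ) ^ 2) = (((1 + x ^ 2 : ℝ)) : ℂ) := by push_cast; ring
  have h2 : (((1 + x ^ 2 : ℝ)) : ℂ) ^ (1/2 : ℂ) = ((Real.sqrt (1 + x ^ 2) : ℝ) : ℂ) := by
    rw [show (1/2 : ℂ) = ((1/2 : ℝ) : ℂ) by norm_num,
      ← Complex.ofReal_cpow (by positivity)]
    rw [Real.sqrt_eq_rpow]
  rw [h1, h2]
  have h3 : (-((Real.sqrt (1 + x ^ 2) : ℂ) + (x : ℂ)) / 4 : ℂ)
      = ((-(Real.sqrt (1 + x ^ 2) + x) / 4 : ℝ) : ℂ) := by push_cast; ring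
  rw [h3, ← Complex.ofReal_exp]

lemma re_sqrt_half {w : ℂ} (hw : w ∈ Complex.slitPlane) :
    0 ≤ (w ^ (1/2 : ℂ)).re ∧ (w ^ (1/2 : ℂ)).re ^ 2 = (‖w‖ + w.re) / 2 := by
  have hw0 : w ≠ 0 := Complex.slitPlane_ne_zero hw
  have habs : 0 < ‖w‖ := norm_pos_iff.mpr hw0
  have h1 : w ^ (1/2 : ℂ) = Complex.exp (Complex.log w * (1/2 : ℂ)) :=
    Complex.cpow_def_of_ne_zero hw0 _
  have h2 : (Complex.log w * (1/2 : ℂ)).re = Real.log ‖w‖ / 2 := by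
    simp [Complex.log_re]; ring
  have h3 : (Complex.log w * (1/2 : ℂ)).im = Complex.arg w / 2 := by
    simp [Complex.log_im]; ring
  have h4 : (w ^ (1/2 : ℂ)).re
      = Real.sqrt ‖w‖ * Real.cos (Complex.arg w / 2) := by
    rw [h1, Complex.exp_re, h2, h3]
    congr 1
    rw [Real.sqrt_eq_rpow, Real.rpow_def_of_pos habs]
    ring_nf
  have hcos : 0 ≤ Real.cos (Complex.arg w / 2) := by
    apply Real.cos_nonneg_of_mem_Icc
    constructor
    · nlinarith [Complex.neg_pi_lt_arg w]
    · nlinarith [Complex.arg_le_pi w]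
  constructor
  · rw [h4]; positivity
  · rw [h4, mul_pow, Real.sq_sqrt habs.le,
      Real.cos_half (Complex.neg_pi_lt_arg w).le (Complex.arg_le_pi w),
      Real.sq_sqrt (by nlinarith [Real.neg_one_le_cos (Complex.arg w)]),
      Complex.cos_arg hw0]
    field_simp

lemma re_exponent_nonneg {z : ℂ} (hz : |z.im| < 1) :
    0 ≤ ((1 + z ^ 2) ^ (1/2 : ℂ)).re + z.re := by
  obtain ⟨hu0, hu2⟩ := re_sqrt_half (slit hz)
  set u := ((1 + z ^ 2) ^ (1/2 : ℂ)).re with hu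
  set x := z.re; set y := z.im
  have hre : (1 + z ^ 2).re = 1 + x ^ 2 - y ^ 2 := by
    simp [Complex.add_re, pow_two, Complex.mul_re]; ring
  have him : (1 + z ^ 2).im = 2 * x * y := by
    simp [Complex.add_im, pow_two, Complex.mul_im]; ring
  have hsq : ‖1 + z ^ 2‖ ^ 2 = (1 + x ^ 2 - y ^ 2) ^ 2 + (2 * x * y) ^ 2 := by
    rw [Complex.sq_norm, Complex.normSq_apply, hre, him]; ring
  have habs0 : 0 ≤ ‖1 + z ^ 2‖ := norm_nonneg _
  have hge : x ^ 2 + y ^ 2 - 1 ≤ ‖1 + z ^ 2‖ := by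
    nlinarith [sq_nonneg (‖1 + z ^ 2‖ - (x ^ 2 + y ^ 2 - 1)),
      sq_nonneg (‖1 + z ^ 2‖ + (x ^ 2 + y ^ 2 - 1)), sq_nonneg x]
  rw [hre] at hu2
  nlinarith [sq_nonneg (u + x), sq_nonneg (u - x)]

lemma norm_Fc_le {z : ℂ} (hz : |z.im| < 1) : ‖Fc z‖ ≤ 1 := by
  have key := re_exponent_nonneg hz
  unfold Fc
  rw [Complex.norm_exp, Real.exp_le_one_iff]
  rw [show ((4 : ℂ)) = ((4 : ℝ) : ℂ) by norm_cast, Complex.div_ofReal_re]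
  simp only [Complex.neg_re, Complex.add_re]
  linarith

lemma cauchy_bound {f : ℂ → ℂ} {c : ℂ} {R : NNReal} (hR : 0 < R) {M : ℝ} (hM0 : 0 ≤ M)
    (hd : DifferentiableOn ℂ f (closedBall c R))
    (hM : ∀ z ∈ closedBall c (R : ℝ), ‖f z‖ ≤ M) (n : ℕ) :
    ‖iteratedDeriv n f c‖ ≤ n.factorial * M / (R : ℝ) ^ n := by
  have hp := hd.hasFPowerSeriesOnBall hR
  have h1 := hp.factorial_smul (1 : ℂ) n
  have hRpos : (0 : ℝ) < R := hR
  have h2 : iteratedDeriv n f c = (n.factorial : ℂ) * (cauchyPowerSeries f c R n fun _ => 1) := by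
    rw [iteratedDeriv_eq_iteratedFDeriv, ← h1, nsmul_eq_mul]
  have h3 : ‖cauchyPowerSeries f c R n fun _ => (1 : ℂ)‖ ≤ ‖cauchyPowerSeries f c R n‖ := by
    simpa using (cauchyPowerSeries f c R n).le_opNorm fun _ => (1 : ℂ)
  have h4 := norm_cauchyPowerSeries_le f c R n
  have hcont : Continuous fun θ : ℝ => ‖f (circleMap c R θ)‖ := by
    apply Continuous.norm
    apply hd.continuousOn.comp_continuous (continuous_circleMap c R)
    exact fun θ => circleMap_mem_closedBall c R.2 θ
  have h5 : (∫ θ : ℝ in (0)..2 * Real.pi, ‖f (circleMap c R θ)‖) ≤ 2 * Real.pi * M := by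
    calc (∫ θ : ℝ in (0)..2 * Real.pi, ‖f (circleMap c R θ)‖)
        ≤ ∫ _ : ℝ in (0)..2 * Real.pi, M := by
          apply intervalIntegral.integral_mono_on Real.two_pi_pos.le
            (hcont.intervalIntegrable _ _) (intervalIntegrable_const)
          exact fun θ _ => hM _ (circleMap_mem_closedBall c R.2 θ)
      _ = 2 * Real.pi * M := by simp [mul_comm]
  have h6 : ‖cauchyPowerSeries f c R n‖ ≤ M * ((R : ℝ))⁻¹ ^ n := by
    rw [NNReal.abs_eq] at h4
    refine h4.trans ?_
    apply mul_le_mul_of_nonneg_right _ (by positivity)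
    rw [inv_mul_le_iff₀ Real.two_pi_pos]
    linarith [h5]
  rw [h2, norm_mul, Complex.norm_natCast]
  calc (n.factorial : ℝ) * ‖cauchyPowerSeries f c R n fun _ => (1 : ℂ)‖
      ≤ (n.factorial : ℝ) * (M * ((R : ℝ))⁻¹ ^ n) := by
        exact mul_le_mul_of_nonneg_left (h3.trans h6) (by positivity)
    _ = n.factorial * M / (R : ℝ) ^ n := by
        rw [inv_pow]; field_simp

lemma HasDerivAt.im_of_complex {e : ℂ → ℂ} {e' : ℂ} {z : ℝ} (h : HasDerivAt e e' ↑z) :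
    HasDerivAt (fun x : ℝ => (e ↑x).im) e'.im z := by
  have A : HasFDerivAt ((↑) : ℝ → ℂ) ofRealCLM z := ofRealCLM.hasFDerivAt
  have B : HasFDerivAt e ((ContinuousLinearMap.smulRight 1 e' : ℂ →L[ℂ] ℂ).restrictScalars ℝ)
      (ofRealCLM z) := h.hasFDerivAt.restrictScalars ℝ
  have C : HasFDerivAt Complex.im imCLM (e (ofRealCLM z)) := imCLM.hasFDerivAt
  convert (C.comp z (B.comp z A)).hasDerivAt using 1
  · rfl
  · rfl
  · rfl
  rw [ContinuousLinearMap.comp_apply, ContinuousLinearMap.comp_apply]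
  simp

noncomputable def hfun : ℝ → ℝ := fun x => Real.exp (-(Real.sqrt (1 + x ^ 2) + x) / 4)

lemma strip_open : IsOpen {z : ℂ | |z.im| < 1} := by
  have : {z : ℂ | |z.im| < 1} = Complex.im ⁻¹' (Set.Ioo (-1) 1) := by
    ext z; simp [abs_lt]
  rw [this]
  exact isOpen_Ioo.preimage Complex.continuous_im

lemma Fc_analytic (n : ℕ) : AnalyticOnNhd ℂ (iteratedDeriv n Fc) {z : ℂ | |z.im| < 1} := by
  induction n with
  | zero =>
    simp only [iteratedDeriv_zero]
    exact DifferentiableOn.analyticOnNhd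
      (fun z hz => (Fc_diffAt hz).differentiableWithinAt) strip_open
  | succ n ih =>
    rw [iteratedDeriv_succ]
    exact ih.deriv

lemma key (n : ℕ) (x : ℝ) : iteratedDeriv n Fc ↑x = ((iteratedDeriv n hfun x : ℝ) : ℂ) := by
  induction n generalizing x with
  | zero =>
    simp only [iteratedDeriv_zero]
    exact Fc_real x
  | succ n ih =>
    have hx : (↑x : ℂ) ∈ {z : ℂ | |z.im| < 1} := by simp
    have hG : HasDerivAt (iteratedDeriv n Fc) (iteratedDeriv (n + 1) Fc ↑x) ↑x := by
      rw [iteratedDeriv_succ]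
      exact (((Fc_analytic n) _ hx).differentiableAt).hasDerivAt
    have hre : HasDerivAt (fun y : ℝ => ((iteratedDeriv n Fc ↑y).re))
        (iteratedDeriv (n + 1) Fc ↑x).re x := hG.real_of_complex
    have him : HasDerivAt (fun y : ℝ => ((iteratedDeriv n Fc ↑y).im))
        (iteratedDeriv (n + 1) Fc ↑x).im x := hG.im_of_complex
    have hfe : (fun y : ℝ => ((iteratedDeriv n Fc ↑y).re)) = iteratedDeriv n hfun := by
      funext y; rw [ih y]; simp
    have hie : (fun y : ℝ => ((iteratedDeriv n Fc ↑y).im)) = fun _ => (0 : ℝ) := by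
      funext y; rw [ih y]; simp
    rw [hfe] at hre
    rw [hie] at him
    have h1 : iteratedDeriv (n + 1) hfun x = (iteratedDeriv (n + 1) Fc ↑x).re := by
      rw [iteratedDeriv_succ]; exact (hre.deriv).symm ▸ rfl
    have h2 : (iteratedDeriv (n + 1) Fc ↑x).im = 0 := by
      have := him.deriv
      rw [deriv_const] at this
      exact this.symm
    rw [h1]
    exact (Complex.ext (by simp) (by simp [h2])).symm

lemma part1 (k : ℕ) (x : ℝ) :
    |iteratedDeriv k hfun x| ≤ (7 / 2 : ℝ) ^ k * Nat.factorial k := by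
  have hRcoe : (((2 / 7 : NNReal)) : ℝ) = 2 / 7 := by norm_num
  have hsub : closedBall (↑x : ℂ) (((2 / 7 : NNReal)) : ℝ) ⊆ {z : ℂ | |z.im| < 1} := by
    intro z hz
    rw [mem_closedBall, Complex.dist_eq] at hz
    have h1 : |(z - ↑x).im| ≤ ‖z - ↑x‖ := Complex.abs_im_le_norm _
    have h2 : (z - (↑x : ℂ)).im = z.im := by simp
    rw [h2] at h1
    simp only [Set.mem_setOf_eq]
    rw [hRcoe] at hz
    linarith
  have hd : DifferentiableOn ℂ Fc (closedBall (↑x : ℂ) (((2 / 7 : NNReal)) : ℝ)) :=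
    fun z hz => (Fc_diffAt (hsub hz)).differentiableWithinAt
  have hM : ∀ z ∈ closedBall (↑x : ℂ) (((2 / 7 : NNReal)) : ℝ), ‖Fc z‖ ≤ 1 :=
    fun z hz => norm_Fc_le (hsub hz)
  have hb := cauchy_bound (R := 2 / 7) (by norm_num) zero_le_one hd hM k
  have heq : |iteratedDeriv k hfun x| = ‖iteratedDeriv k Fc ↑x‖ := by
    rw [key k x, Complex.norm_real, Real.norm_eq_abs]
  rw [heq]
  refine hb.trans ?_
  rw [hRcoe, mul_one]
  rw [div_le_iff₀ (by positivity)]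
  rw [mul_comm ((7 / 2 : ℝ) ^ k) _, mul_assoc]
  refine le_mul_of_one_le_right (by positivity) ?_
  rw [← mul_pow]
  norm_num

noncomputable def phi : ℝ → ℝ := fun x =>
  Real.exp (-(Real.sqrt (1 + x ^ 2) + x) / 4) * (-(x / Real.sqrt (1 + x ^ 2) + 1) / 4)

lemma sqrt_pos' (x : ℝ) : 0 < Real.sqrt (1 + x ^ 2) :=
  Real.sqrt_pos.2 (by positivity)

lemma hfun_hasDeriv (x : ℝ) : HasDerivAt hfun (phi x) x := by
  have hpos : (0 : ℝ) < 1 + x ^ 2 := by positivity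
  have hs : HasDerivAt (fun x : ℝ => 1 + x ^ 2) (2 * x) x := by
    simpa using ((hasDerivAt_pow 2 x).const_add 1)
  have hsqrt : HasDerivAt (fun x : ℝ => Real.sqrt (1 + x ^ 2))
      (1 / (2 * Real.sqrt (1 + x ^ 2)) * (2 * x)) x :=
    (Real.hasDerivAt_sqrt hpos.ne').comp x hs
  have hinner : HasDerivAt (fun x : ℝ => -(Real.sqrt (1 + x ^ 2) + x) / 4)
      (-(1 / (2 * Real.sqrt (1 + x ^ 2)) * (2 * x) + 1) / 4) x :=
    ((hsqrt.add (hasDerivAt_id x)).neg).div_const 4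
  have := hinner.exp
  convert this using 1
  · rfl
  unfold phi
  have hs0 : Real.sqrt (1 + x ^ 2) ≠ 0 := (sqrt_pos' x).ne'
  field_simp

lemma deriv_hfun : deriv hfun = phi := funext fun x => (hfun_hasDeriv x).deriv

lemma phi_cont : Continuous phi := by
  have hc1 : Continuous fun x : ℝ => Real.sqrt (1 + x ^ 2) := by fun_prop
  have hdiv : Continuous fun x : ℝ => x / Real.sqrt (1 + x ^ 2) :=
    continuous_id.div hc1 fun x => (sqrt_pos' x).ne'
  exact ((Real.continuous_exp.comp ((hc1.add continuous_id).neg.div_const 4))).mul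
    ((hdiv.add continuous_const).neg.div_const 4)

lemma phi_bound_neg {x : ℝ} (hx : x ≤ 0) : ‖phi x‖ ≤ (1 + x ^ 2)⁻¹ / 4 := by
  set s := Real.sqrt (1 + x ^ 2) with hsdef
  have hs0 : 0 < s := sqrt_pos' x
  have hs2 : s ^ 2 = 1 + x ^ 2 := Real.sq_sqrt (by positivity)
  have hs1 : 1 ≤ s := by nlinarith
  have hsx : -x ≤ s := by nlinarith [sq_nonneg (s + x)]
  have hfac0 : -(x / s + 1) / 4 ≤ 0 := by
    apply div_nonpos_of_nonpos_of_nonneg _ (by norm_num)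
    have : -1 ≤ x / s := by rw [neg_le, ← neg_div, div_le_one hs0]; linarith
    linarith
  have hexp : Real.exp (-(s + x) / 4) ≤ 1 := by
    rw [Real.exp_le_one_iff]
    apply div_nonpos_of_nonpos_of_nonneg _ (by norm_num)
    linarith
  have habs : ‖phi x‖ = Real.exp (-(s + x) / 4) * ((x / s + 1) / 4) := by
    rw [phi, Real.norm_eq_abs, abs_mul, _root_.abs_of_nonneg (Real.exp_nonneg _),
      _root_.abs_of_nonpos hfac0]
    ring
  rw [habs]
  have hkey : (x / s + 1) / 4 ≤ (1 + x ^ 2)⁻¹ / 4 := by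
    gcongr
    rw [← hs2, inv_eq_one_div, div_add' _ _ _ hs0.ne', div_le_div_iff₀ hs0 (by positivity)]
    have hneg : x * s + x ^ 2 ≤ 0 := by nlinarith
    nlinarith [mul_nonpos_of_nonneg_of_nonpos hs0.le hneg]
  have hfacnn : 0 ≤ (x / s + 1) / 4 := by linarith [hfac0]
  calc Real.exp (-(s + x) / 4) * ((x / s + 1) / 4)
      ≤ 1 * ((1 + x ^ 2)⁻¹ / 4) := mul_le_mul hexp hkey hfacnn zero_le_one
    _ = (1 + x ^ 2)⁻¹ / 4 := one_mul _

lemma phi_bound_pos {x : ℝ} (hx : 0 ≤ x) : ‖phi x‖ ≤ Real.exp (-(1/4) * x) * (1/2) := by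
  set s := Real.sqrt (1 + x ^ 2) with hsdef
  have hs0 : 0 < s := sqrt_pos' x
  have hs2 : s ^ 2 = 1 + x ^ 2 := Real.sq_sqrt (by positivity)
  have hsx : x ≤ s := by nlinarith [sq_nonneg (s - x)]
  have hfac0 : -(x / s + 1) / 4 ≤ 0 := by
    apply div_nonpos_of_nonpos_of_nonneg _ (by norm_num)
    have : 0 ≤ x / s := div_nonneg hx hs0.le
    linarith
  have habs : ‖phi x‖ = Real.exp (-(s + x) / 4) * ((x / s + 1) / 4) := by
    rw [phi, Real.norm_eq_abs, abs_mul, _root_.abs_of_nonneg (Real.exp_nonneg _),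
      _root_.abs_of_nonpos hfac0]
    ring
  rw [habs]
  have hexp : Real.exp (-(s + x) / 4) ≤ Real.exp (-(1/4) * x) := by
    apply Real.exp_le_exp.2
    nlinarith
  have hfac : (x / s + 1) / 4 ≤ 1 / 2 := by
    have h1 : x / s ≤ 1 := by rw [div_le_one hs0]; exact hsx
    linarith
  have hfacnn : 0 ≤ (x / s + 1) / 4 := by linarith [hfac0]
  calc Real.exp (-(s + x) / 4) * ((x / s + 1) / 4)
      ≤ Real.exp (-(1/4) * x) * (1/2) :=
        mul_le_mul hexp hfac hfacnn (Real.exp_nonneg _)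

lemma phi_integrable : MeasureTheory.Integrable phi := by
  rw [← MeasureTheory.integrableOn_univ, ← Set.Iic_union_Ioi (a := (0 : ℝ))]
  apply MeasureTheory.IntegrableOn.union
  · apply MeasureTheory.Integrable.mono'
      ((integrable_inv_one_add_sq.div_const 4).integrableOn)
      (phi_cont.aestronglyMeasurable.restrict)
    rw [MeasureTheory.ae_restrict_iff' measurableSet_Iic]
    filter_upwards with x hx
    exact phi_bound_neg hx
  · apply MeasureTheory.Integrable.mono'
      (((exp_neg_integrableOn_Ioi 0 (by norm_num : (0:ℝ) < 1/4)).mul_const (1/2)))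
      (phi_cont.aestronglyMeasurable.restrict)
    rw [MeasureTheory.ae_restrict_iff' measurableSet_Ioi]
    filter_upwards with x hx
    exact phi_bound_pos hx.le

/-- The function `h(x) = exp(−(√(1+x²)+x)/4)` belongs to the Gevrey class
`𝒢¹_{1,7/2}(ℝ)`: `|h^{(k)}(x)| ≤ (7/2)^k k!` for all `k`, `x`; moreover `h'`
is integrable on `ℝ`. -/
theorem stmt_12 :
    (∀ (k : ℕ) (x : ℝ),
      |iteratedDeriv k
          (fun x : ℝ => Real.exp (-(Real.sqrt (1 + x ^ 2) + x) / 4)) x| ≤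
        (7 / 2 : ℝ) ^ k * Nat.factorial k) ∧
    MeasureTheory.Integrable
      (deriv fun x : ℝ => Real.exp (-(Real.sqrt (1 + x ^ 2) + x) / 4)) := by
  constructor
  · exact part1
  · rw [show (fun x : ℝ => Real.exp (-(Real.sqrt (1 + x ^ 2) + x) / 4)) = hfun from rfl,
      deriv_hfun]
    exact phi_integrable
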